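/- For every k ∈ ℂ, every pair of column vectors y, ỹ ∈ ℂ², and each ε ∈ {+1,−1}: P_ε·{ (a₁₂^{−ε}·a₂₁^{−ε} − a₁₁^{−ε}·a₂₂^{−ε})·I + 2·conj(k)·[ |ỹ⟩·(conj(a₁₁^ε)·⟨ỹ| − conj(a₁₂^ε)·⟨y|) − |y⟩·(conj(a₂₁^ε)·⟨ỹ| − conj(a₂₂^ε)·⟨y|) ] }·P_ε = 0, where P_ε = (I+εσ₃)/2. -/
import Mathlib


open Matrix Complex ComplexConjugate

noncomputable section

abbrev M2 := Matrix (Fin 2) (Fin 2) ℂ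
abbrev Vec2 := Matrix (Fin 2) (Fin 1) ℂ

def sigma3 : M2 := !![1, 0; 0, -1]
def sigma2 : M2 := !![0, -Complex.I; Complex.I, 0]

/-- ⟨u|M|v⟩ = u†Mv -/
def qform (u : Vec2) (M : M2) (v : Vec2) : ℂ := (uᴴ * M * v) 0 0

def a11 (k : ℂ) (y : Vec2) (ε : ℂ) : ℂ :=
  k * qform y (1 + ε • sigma3) y + conj k * qform y (1 - ε • sigma3) y

def a12 (k : ℂ) (y yt : Vec2) (ε : ℂ) : ℂ :=
  k * qform y (1 + ε • sigma3) yt + conj k * qform y (1 - ε • sigma3) yt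

def a21 (k : ℂ) (y yt : Vec2) (ε : ℂ) : ℂ :=
  k * qform yt (1 + ε • sigma3) y + conj k * qform yt (1 - ε • sigma3) y

def a22 (k : ℂ) (yt : Vec2) (ε : ℂ) : ℂ :=
  k * qform yt (1 + ε • sigma3) yt + conj k * qform yt (1 - ε • sigma3) yt

def b11 (k : ℂ) (y : Vec2) (ε : ℂ) : ℂ :=
  (k ^ 2 + (conj k) ^ 2) * qform y (1 + ε • sigma3) y
    + 2 * k * conj k * qform y (1 - ε • sigma3) y

def b12 (k : ℂ) (y yt : Vec2) (ε : ℂ) : ℂ :=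
  (k ^ 2 + (conj k) ^ 2) * qform y (1 + ε • sigma3) yt
    + 2 * k * conj k * qform y (1 - ε • sigma3) yt

def b21 (k : ℂ) (y yt : Vec2) (ε : ℂ) : ℂ :=
  (k ^ 2 + (conj k) ^ 2) * qform yt (1 + ε • sigma3) y
    + 2 * k * conj k * qform yt (1 - ε • sigma3) y

def c11 (k : ℂ) (y : Vec2) (ε : ℂ) : ℂ :=
  (k ^ 3 + 3 * k * (conj k) ^ 2) * qform y (1 + ε • sigma3) y
    + ((conj k) ^ 3 + 3 * conj k * k ^ 2) * qform y (1 - ε • sigma3) y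

def Δf (k : ℂ) (y yt : Vec2) (ε : ℂ) : ℂ :=
  (k ^ 2 - (conj k) ^ 2) ^ 2
      * (a21 k y yt ε * a12 k y yt ε - a11 k y ε * a22 k yt ε)
    + 2 * a11 k y ε * c11 k y (-ε) - b11 k y ε * b11 k y (-ε)
    + (k ^ 2 - (conj k) ^ 2)
      * (a21 k y yt ε * b11 k y (-ε) - a12 k y yt ε * b11 k y ε
          + a11 k y ε * (b12 k y yt ε - b21 k y yt (-ε)))

/-- P_ε = (I+εσ₃)/2 -/
def Pe (ε : ℂ) : M2 := (1 / 2 : ℂ) • (1 + ε • sigma3)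

lemma qform_smul (u v : Vec2) (c : ℂ) :
    qform u (1 + c • sigma3) v
      = (1 + c) * conj (u 0 0) * v 0 0 + (1 - c) * conj (u 1 0) * v 1 0 := by
  simp [qform, sigma3, Matrix.mul_apply, Fin.sum_univ_two, Matrix.one_apply]
  ring

lemma qform_smul' (u v : Vec2) (c : ℂ) :
    qform u (1 - c • sigma3) v
      = (1 - c) * conj (u 0 0) * v 0 0 + (1 + c) * conj (u 1 0) * v 1 0 := by
  rw [sub_eq_add_neg, ← neg_smul, qform_smul]; ring

set_option maxHeartbeats 2000000 in
theorem lemma2_first (k : ℂ) (y yt : Vec2) (ε : ℂ) (hε : ε = 1 ∨ ε = -1) :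
    Pe ε * ((a12 k y yt (-ε) * a21 k y yt (-ε) - a11 k y (-ε) * a22 k yt (-ε)) • (1 : M2)
        + (2 * conj k) •
          (yt * (conj (a11 k y ε) • ytᴴ - conj (a12 k y yt ε) • yᴴ)
            - y * (conj (a21 k y yt ε) • ytᴴ - conj (a22 k yt ε) • yᴴ))) * Pe ε
      = 0 := by
  have e1 : (2:ℂ) - 1 = 1 := by norm_num
  rcases hε with h | h <;> subst h <;>
  · ext i j
    fin_cases i <;> fin_cases j <;>
    · simp only [a11, a12, a21, a22, qform_smul, qform_smul']
      simp only [Pe, sigma3,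
        Matrix.mul_apply, Matrix.add_apply, Matrix.sub_apply, Matrix.smul_apply,
        Matrix.one_apply, Matrix.conjTranspose_apply, Matrix.cons_val',
        Matrix.cons_val_zero, Matrix.cons_val_one, Matrix.head_cons,
        Matrix.empty_val', Matrix.cons_val_fin_one, Matrix.zero_apply,
        Fin.sum_univ_two, map_add, _root_.map_mul, map_sub, _root_.map_one, map_neg,
        map_ofNat, Complex.conj_conj, smul_eq_mul, Fin.isValue, ne_eq,
        Fin.zero_eq_one_iff, Fin.one_eq_zero_iff, neg_smul, one_smul, neg_neg]
      try simp only [map_ofNat, Complex.conj_conj]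
      norm_num
      try ring_nf
      try simp only [Complex.conj_conj]
      try ring
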